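/- Let k ≥ l > 1 and let v ≠ u be vertices such that l ≤ l_p if v ∈ B and l ≤ l_c if v ∉ B. Then F_{k,l}^{vu} = ⋃_{w ∈ V, w ≠ v, (w,u) ∈ A} F_{k−1,l−1}^{vw} ⊎ {u}. -/

import Mathlib

/-- An element of a path-cycle packing: a list of vertices together with a flag
telling whether it is a cycle (`true`) or a path (`false`). -/
structure PCElem (V : Type*) where
  verts : List V
  isCycle : Bool

/-- A valid element w.r.t. the arc relation `A`: the vertices are distinct,
consecutive vertices are joined by arcs, there are at least two vertices
(so paths have length ≥ 1 and cycles have length ≥ 2), and for a cycle the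
last vertex is joined back to the first. -/
def ValidElem {V : Type*} (A : V → V → Prop) (e : PCElem V) : Prop :=
  e.verts.Nodup ∧ e.verts.Chain' A ∧ 2 ≤ e.verts.length ∧
    (e.isCycle = true → ∀ h : e.verts ≠ [], A (e.verts.getLast h) (e.verts.head h))

/-- The length (number of arcs) of an element: a cycle on `k` vertices has length `k`,
a path on `k` vertices has length `k - 1`. -/
def elemLen {V : Type*} (e : PCElem V) : ℕ :=
  if e.isCycle then e.verts.length else e.verts.length - 1

/-- The vertex set of an element. -/
def elemVerts {V : Type*} [DecidableEq V] (e : PCElem V) : Finset V :=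
  e.verts.toFinset

/-- A path-cycle packing: a finite set of valid, pairwise vertex-disjoint
paths and cycles. -/
def IsPacking {V : Type*} [DecidableEq V] (A : V → V → Prop)
    (D : Finset (PCElem V)) : Prop :=
  (∀ e ∈ D, ValidElem A e) ∧
    (D : Set (PCElem V)).Pairwise fun e f => Disjoint (elemVerts e) (elemVerts f)

/-- `c(D)`: the total length of a packing. -/
def packLen {V : Type*} (D : Finset (PCElem V)) : ℕ :=
  ∑ e ∈ D, elemLen e

/-- `V(D)`: the set of vertices appearing in a packing. -/
def packVerts {V : Type*} [DecidableEq V] (D : Finset (PCElem V)) : Finset V :=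
  D.biUnion elemVerts

/-- A feasible path: starts at an altruistic vertex of `B` and has length at most `lp`. -/
def FeasPath {V : Type*} (B : Set V) (lp : ℕ) (e : PCElem V) : Prop :=
  e.isCycle = false ∧ (∃ b ∈ B, e.verts.head? = some b) ∧ e.verts.length - 1 ≤ lp

/-- A feasible cycle: contains no vertex of `B` and has length at most `lc`. -/
def FeasCycle {V : Type*} (B : Set V) (lc : ℕ) (e : PCElem V) : Prop :=
  e.isCycle = true ∧ (∀ w ∈ e.verts, w ∉ B) ∧ e.verts.length ≤ lc

/-- A feasible element: a feasible path or a feasible cycle. -/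
def FeasElem {V : Type*} (B : Set V) (lp lc : ℕ) (e : PCElem V) : Prop :=
  FeasPath B lp e ∨ FeasCycle B lc e

/-- A feasible path-cycle packing. -/
def FeasPacking {V : Type*} [DecidableEq V] (A : V → V → Prop) (B : Set V)
    (lp lc : ℕ) (D : Finset (PCElem V)) : Prop :=
  IsPacking A D ∧ ∀ e ∈ D, FeasElem B lp lc e

/-- A semi-feasible element: a feasible path, a feasible cycle, or a path of
length at most `lc` containing no vertex of `B`. -/
def SemiElem {V : Type*} (B : Set V) (lp lc : ℕ) (e : PCElem V) : Prop :=
  FeasElem B lp lc e ∨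
    (e.isCycle = false ∧ (∀ w ∈ e.verts, w ∉ B) ∧ e.verts.length - 1 ≤ lc)

/-- `e` is a `D_l^{vu}`: a path of length `l` from `v` to `u` when `v ≠ u`, and a
cycle of length `l` through `v` when `v = u`. -/
def IsDlvu {V : Type*} [DecidableEq V] (v u : V) (l : ℕ) (e : PCElem V) : Prop :=
  if v = u then
    e.isCycle = true ∧ v ∈ e.verts ∧ e.verts.length = l
  else
    e.isCycle = false ∧ e.verts.head? = some v ∧ e.verts.getLast? = some u ∧
      e.verts.length = l + 1

/-- `F_{k,l}^{vu}`: the collection of vertex sets `V(D)` over all semi-feasible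
packings `D = P ∪ C ∪ {D_l^{vu}}` with `c(D) = k`; the distinguished element
`D_l^{vu}` is semi-feasible and every other element is feasible. -/
def FF {V : Type*} [DecidableEq V] (A : V → V → Prop) (B : Set V) (lp lc : ℕ)
    (k l : ℕ) (v u : V) : Set (Finset V) :=
  { S | ∃ (D : Finset (PCElem V)) (e : PCElem V),
      IsPacking A D ∧ e ∈ D ∧ IsDlvu v u l e ∧ SemiElem B lp lc e ∧
      (∀ f ∈ D, f ≠ e → FeasElem B lp lc f) ∧ packLen D = k ∧ packVerts D = S }

/-- `F ⊎ T = { X ∪ T : X ∈ F, X ∩ T = ∅ }` for a collection of finite sets. -/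
def uplusS {V : Type*} [DecidableEq V] (F : Set (Finset V)) (T : Finset V) :
    Set (Finset V) :=
  { Z | ∃ X ∈ F, Disjoint X T ∧ Z = X ∪ T }


private instance {V : Type*} [DecidableEq V] : DecidableEq (PCElem V) :=
  fun a b => decidable_of_iff (a.verts = b.verts ∧ a.isCycle = b.isCycle)
    (by cases a; cases b; simp [PCElem.mk.injEq])

private lemma mem_packVerts' {V : Type*} [DecidableEq V] {D : Finset (PCElem V)} {x : V} :
    x ∈ packVerts D ↔ ∃ e ∈ D, x ∈ e.verts := by
  simp [packVerts, elemVerts]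

private lemma head_ne_getLast' {α : Type*} {xs : List α} (h : xs.Nodup) (hne : xs ≠ [])
    (h2 : 2 ≤ xs.length) : xs.getLast hne ≠ xs.head hne := by
  match xs, hne with
  | a :: t, _ =>
    have ht : t ≠ [] := by
      intro h'; subst h'; simp at h2
    rw [List.getLast_cons ht, List.head_cons]
    intro h'
    exact (List.nodup_cons.mp h).1 (h' ▸ List.getLast_mem ht)

/-- (Case (iii) of the DP recurrence) For `k ≥ l > 1` and vertices `v ≠ u` with
`l ≤ l_p` if `v ∈ B` and `l ≤ l_c` if `v ∉ B`:
`F_{k,l}^{vu} = ⋃_{w ≠ v, (w,u) ∈ A} F_{k-1,l-1}^{vw} ⊎ {u}`. -/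
theorem FF_recurrence_extend_path {V : Type*} [Fintype V] [DecidableEq V]
    (A : V → V → Prop) (B : Set V) (lp lc : ℕ)
    (hloop : ∀ v, ¬ A v v) (hB : ∀ v u, A v u → u ∉ B)
    (k l : ℕ) (v u : V) (hkl : l ≤ k) (hl : 1 < l) (hvu : v ≠ u)
    (h1 : v ∈ B → l ≤ lp) (h2 : v ∉ B → l ≤ lc) :
    FF A B lp lc k l v u =
      ⋃ (w : V) (_ : w ≠ v) (_ : A w u),
        uplusS (FF A B lp lc (k - 1) (l - 1) v w) {u} := by
  ext S
  simp only [Set.mem_iUnion]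
  constructor
  · rintro ⟨D, e, ⟨hval, hdisj⟩, heD, hdl, hsemi, hfeas, hlen, rfl⟩
    rw [IsDlvu, if_neg hvu] at hdl
    obtain ⟨hcyc, hhead, hlast, hlength⟩ := hdl
    have hne : e.verts ≠ [] := by
      intro h; rw [h] at hlength; simp at hlength
    have hlast_eq : e.verts.getLast hne = u := by
      rw [List.getLast?_eq_getLast hne] at hlast
      exact Option.some_injective _ hlast
    have hx : e.verts = e.verts.dropLast ++ [u] := by
      conv_lhs => rw [← List.dropLast_append_getLast hne, hlast_eq]
    set xs := e.verts.dropLast with hxs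
    have hxslen : xs.length = l := by
      have := congrArg List.length hx
      simp at this; omega
    have hxne : xs ≠ [] := by
      intro h; rw [h] at hxslen; simp at hxslen; omega
    set w := xs.getLast hxne with hw
    obtain ⟨hnodup, hchain, hlen2, -⟩ := hval e heD
    rw [hx] at hnodup hchain
    obtain ⟨hxnodup, -, hdisj_u⟩ := List.nodup_append'.mp hnodup
    have hu_xs : u ∉ xs := fun h => hdisj_u h (by simp)
    obtain ⟨hxchain, -, harc⟩ := List.isChain_append.mp hchain
    have hAwu : A w u := harc w (by rw [List.getLast?_eq_getLast hxne]; exact rfl) u rfl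
    have hheadxs : xs.head? = some v := by
      rw [hx, List.head?_append, List.head?_eq_head hxne] at hhead
      rw [List.head?_eq_head hxne]
      simpa using hhead
    have hheadv : xs.head hxne = v := by
      rw [List.head?_eq_head hxne] at hheadxs
      exact Option.some_injective _ hheadxs
    have hwv : w ≠ v := by
      rw [← hheadv]
      exact head_ne_getLast' hxnodup hxne (by omega)
    refine ⟨w, hwv, hAwu, ?_⟩
    set e' : PCElem V := ⟨xs, false⟩ with he'
    have hsub : elemVerts e' ⊆ elemVerts e := by
      intro x hx'
      simp only [elemVerts, List.mem_toFinset, he'] at hx' ⊢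
      rw [hx]; exact List.mem_append_left _ hx'
    have hv_e' : v ∈ elemVerts e' := by
      simp only [elemVerts, List.mem_toFinset, he']
      exact hheadv ▸ List.head_mem hxne
    have hu_e : u ∈ elemVerts e := by
      simp only [elemVerts, List.mem_toFinset]
      rw [hx]; simp
    have hdise : ∀ f ∈ D.erase e, Disjoint (elemVerts e) (elemVerts f) := by
      intro f hf
      exact hdisj (Finset.mem_coe.mpr heD) (Finset.mem_coe.mpr (Finset.mem_of_mem_erase hf))
        (Ne.symm (Finset.ne_of_mem_erase hf))
    have he'notin : e' ∉ D.erase e := by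
      intro h
      exact Finset.disjoint_left.mp (hdise e' h) (hsub hv_e') hv_e'
    set D' : Finset (PCElem V) := insert e' (D.erase e) with hD'
    have hpack' : IsPacking A D' := by
      constructor
      · intro f hf
        rcases Finset.mem_insert.mp hf with rfl | hf
        · exact ⟨hxnodup, hxchain, by show 2 ≤ xs.length; omega, by simp [he']⟩
        · exact hval f (Finset.mem_of_mem_erase hf)
      · intro f hf g hg hfg
        simp only [hD', Finset.coe_insert, Set.mem_insert_iff, Finset.mem_coe] at hf hg
        rcases hf with rfl | hf
        · rcases hg with rfl | hg
          · exact absurd rfl hfg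
          · exact (hdise g hg).mono_left hsub
        · rcases hg with rfl | hg
          · exact ((hdise f hf).mono_left hsub).symm
          · exact hdisj (Finset.mem_coe.mpr (Finset.mem_of_mem_erase hf))
              (Finset.mem_coe.mpr (Finset.mem_of_mem_erase hg)) hfg
    have hsumer : elemLen e + ∑ f ∈ D.erase e, elemLen f = k := by
      rw [Finset.add_sum_erase D elemLen heD]; exact hlen
    have hlene : elemLen e = l := by
      simp [elemLen, hcyc, hlength]
    have hsum' : packLen D' = k - 1 := by
      rw [hD', packLen, Finset.sum_insert he'notin]
      have : elemLen e' = l - 1 := by simp [elemLen, he', hxslen]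
      omega
    have hunotin : u ∉ packVerts D' := by
      rw [mem_packVerts']
      rintro ⟨f, hf, hfu⟩
      rcases Finset.mem_insert.mp hf with rfl | hf
      · exact hu_xs hfu
      · exact Finset.disjoint_left.mp (hdise f hf) hu_e
          (by simpa [elemVerts, List.mem_toFinset] using hfu)
    have hDsplit : packVerts D = packVerts D' ∪ {u} := by
      conv_lhs => rw [← Finset.insert_erase heD]
      rw [packVerts, hD', packVerts, Finset.biUnion_insert, Finset.biUnion_insert]
      have hev : elemVerts e = elemVerts e' ∪ {u} := by
        simp only [elemVerts, he']
        rw [hx, List.toFinset_append]; simp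
      rw [hev, Finset.union_assoc, Finset.union_comm {u}, ← Finset.union_assoc]
    refine ⟨packVerts D', ⟨D', e', hpack', Finset.mem_insert_self _ _, ?_, ?_, ?_, hsum', rfl⟩,
      Finset.disjoint_singleton_right.mpr hunotin, hDsplit⟩
    · rw [IsDlvu, if_neg (Ne.symm hwv)]
      refine ⟨rfl, hheadxs, ?_, by show xs.length = l - 1 + 1; omega⟩
      show xs.getLast? = some w
      rw [List.getLast?_eq_getLast hxne]
    · rcases hsemi with (⟨-, ⟨b, hbB, hb⟩, hple⟩ | ⟨hfc, -, -⟩) | ⟨-, hnoB, hlc⟩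
      · left; left
        refine ⟨rfl, ⟨b, hbB, ?_⟩, ?_⟩
        · have hbv : b = v := by
            rw [hhead] at hb
            exact (Option.some_injective _ hb).symm
          show xs.head? = some b
          rw [hbv]
          exact hheadxs
        · show xs.length - 1 ≤ lp
          rw [hlength] at hple
          omega
      · rw [hfc] at hcyc; exact absurd hcyc (by simp)
      · right
        refine ⟨rfl, fun x hxmem => hnoB x ?_, ?_⟩
        · rw [hx]; exact List.mem_append_left _ hxmem
        · show xs.length - 1 ≤ lc
          rw [hlength] at hlc
          omega
    · intro f hf hfe'
      have hf' : f ∈ D.erase e := by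
        rcases Finset.mem_insert.mp hf with rfl | hf
        · exact absurd rfl hfe'
        · exact hf
      exact hfeas f (Finset.mem_of_mem_erase hf') (Finset.ne_of_mem_erase hf')
  · rintro ⟨w, hwv, hAwu, X, ⟨D', e', ⟨hval, hdisj⟩, he'D', hdl, hsemi, hfeas, hlen, rfl⟩, hXu, rfl⟩
    rw [IsDlvu, if_neg (Ne.symm hwv)] at hdl
    obtain ⟨hcyc, hhead, hlast, hlength⟩ := hdl
    have hllen : e'.verts.length = l := by omega
    have hxne : e'.verts ≠ [] := by
      intro h; rw [h] at hllen; simp at hllen; omega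
    have hlastw : e'.verts.getLast hxne = w := by
      rw [List.getLast?_eq_getLast hxne] at hlast
      exact Option.some_injective _ hlast
    have hunotin : u ∉ packVerts D' := fun h => Finset.disjoint_left.mp hXu h (by simp)
    have hu_f : ∀ f ∈ D', u ∉ f.verts := by
      intro f hf h
      exact hunotin (mem_packVerts'.mpr ⟨f, hf, h⟩)
    have hu_xs : u ∉ e'.verts := hu_f e' he'D'
    obtain ⟨hxnodup, hxchain, hlen2, -⟩ := hval e' he'D'
    set e : PCElem V := ⟨e'.verts ++ [u], false⟩ with he
    have hvalid_e : ValidElem A e := by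
      refine ⟨?_, ?_, ?_, by simp [he]⟩
      · rw [he, List.nodup_append']
        exact ⟨hxnodup, List.nodup_singleton u, fun x hx1 hx2 => by
          simp at hx2; exact hu_xs (hx2 ▸ hx1)⟩
      · show List.IsChain A (e'.verts ++ [u])
        rw [List.isChain_append]
        refine ⟨hxchain, List.isChain_singleton u, ?_⟩
        intro x hx1 y hy1
        rw [List.getLast?_eq_getLast hxne] at hx1
        simp at hy1
        simp at hx1
        rw [← hx1, ← hy1, hlastw] at *
        exact hAwu
      · simp [he]; omega
    have hvmem : v ∈ e'.verts := List.mem_of_mem_head? (hhead ▸ rfl)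
    have hev : elemVerts e = elemVerts e' ∪ {u} := by
      simp only [elemVerts, he]
      rw [List.toFinset_append]; simp
    have henotin : e ∉ D'.erase e' := by
      intro h
      exact hu_f e (Finset.mem_of_mem_erase h) (by rw [he]; simp)
    have hdise' : ∀ f ∈ D'.erase e', Disjoint (elemVerts e') (elemVerts f) := by
      intro f hf
      exact hdisj (Finset.mem_coe.mpr he'D') (Finset.mem_coe.mpr (Finset.mem_of_mem_erase hf))
        (Ne.symm (Finset.ne_of_mem_erase hf))
    have hdise : ∀ f ∈ D'.erase e', Disjoint (elemVerts e) (elemVerts f) := by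
      intro f hf
      rw [hev, Finset.disjoint_union_left]
      refine ⟨hdise' f hf, ?_⟩
      rw [Finset.disjoint_singleton_left]
      intro h
      exact hu_f f (Finset.mem_of_mem_erase hf) (by simpa [elemVerts] using h)
    set D : Finset (PCElem V) := insert e (D'.erase e') with hD
    have hpack : IsPacking A D := by
      constructor
      · intro f hf
        rcases Finset.mem_insert.mp hf with rfl | hf
        · exact hvalid_e
        · exact hval f (Finset.mem_of_mem_erase hf)
      · intro f hf g hg hfg
        simp only [hD, Finset.coe_insert, Set.mem_insert_iff, Finset.mem_coe] at hf hg
        rcases hf with rfl | hf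
        · rcases hg with rfl | hg
          · exact absurd rfl hfg
          · exact hdise g hg
        · rcases hg with rfl | hg
          · exact (hdise f hf).symm
          · exact hdisj (Finset.mem_coe.mpr (Finset.mem_of_mem_erase hf))
              (Finset.mem_coe.mpr (Finset.mem_of_mem_erase hg)) hfg
    have hsumer : elemLen e' + ∑ f ∈ D'.erase e', elemLen f = k - 1 := by
      rw [Finset.add_sum_erase D' elemLen he'D']; exact hlen
    have hlene' : elemLen e' = l - 1 := by
      simp [elemLen, hcyc, hllen]
    have hsum : packLen D = k := by
      rw [hD, packLen, Finset.sum_insert henotin]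
      have hle : elemLen e = l := by
        show (e'.verts ++ [u]).length - 1 = l
        simp [hllen]
      rw [hle]
      omega
    have hDsplit : packVerts D = packVerts D' ∪ {u} := by
      conv_rhs => rw [← Finset.insert_erase he'D']
      rw [hD, packVerts, packVerts, Finset.biUnion_insert, Finset.biUnion_insert, hev,
        Finset.union_assoc, Finset.union_comm {u}, ← Finset.union_assoc]
    refine ⟨D, e, hpack, Finset.mem_insert_self _ _, ?_, ?_, ?_, hsum, hDsplit⟩
    · rw [IsDlvu, if_neg hvu]
      refine ⟨rfl, ?_, ?_, by show (e'.verts ++ [u]).length = l + 1; simp [hllen]⟩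
      · show (e'.verts ++ [u]).head? = some v
        rw [List.head?_append, List.head?_eq_head hxne]
        rw [List.head?_eq_head hxne] at hhead
        simpa using hhead
      · show (e'.verts ++ [u]).getLast? = some u
        exact List.getLast?_concat
    · rcases hsemi with (⟨-, ⟨b, hbB, hb⟩, -⟩ | ⟨hfc, -, -⟩) | ⟨-, hnoB, -⟩
      · left; left
        have hbv : b = v := by
          rw [hhead] at hb
          exact (Option.some_injective _ hb).symm
        refine ⟨rfl, ⟨b, hbB, ?_⟩, ?_⟩
        · show (e'.verts ++ [u]).head? = some b
          rw [List.head?_append, List.head?_eq_head hxne]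
          rw [List.head?_eq_head hxne] at hb
          simpa using hb
        · show (e'.verts ++ [u]).length - 1 ≤ lp
          simp [hllen]
          have := h1 (hbv ▸ hbB)
          omega
      · rw [hfc] at hcyc; exact absurd hcyc (by simp)
      · right
        refine ⟨rfl, ?_, ?_⟩
        · intro x hxmem
          rw [he] at hxmem
          simp only [List.mem_append, List.mem_singleton] at hxmem
          rcases hxmem with hxmem | rfl
          · exact hnoB x hxmem
          · exact hB w x hAwu
        · show (e'.verts ++ [u]).length - 1 ≤ lc
          simp [hllen]
          have := h2 (hnoB v hvmem)
          omega
    · intro f hf hfe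
      have hf' : f ∈ D'.erase e' := by
        rcases Finset.mem_insert.mp hf with rfl | hf
        · exact absurd rfl hfe
        · exact hf
      exact hfeas f (Finset.mem_of_mem_erase hf') (Finset.ne_of_mem_erase hf')
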